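/- Let E ⊂ ℝ^{n+1} be a set, x ∈ E, and suppose there exist constants c, ρ > 0 such that H^n(B(y,r) ∩ E) ≥ c·r^n for all y ∈ B(x,ρ) ∩ E and all 0 < r ≤ ρ. Suppose further that for some η with 0 < η < min{2^{-4n}, c²}, there is an n-dimensional affine subspace P through x and radius r_0 > 0 such that H^n((E ∩ B(x,r)) \ P^{(ηr)}) < η r^n for all 0 < r < r_0, where P^{(ηr)} denotes the closed ηr-neighborhood of P. Then the open truncated cone with vertex x, axis normal to P, height η^{1/(4n)}·min{r_0, ρ}, and aperture 2·arctan(η^{-1/(4n)}/2) is disjoint from E. -/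

import Mathlib

open Metric MeasureTheory Set Filter
open scoped RealInnerProductSpace Topology

noncomputable section

/-- The open truncated cone with vertex `z`, axis (and direction) `ν`,
height `h` and aperture `α`. -/
def truncCone {n : ℕ} (ν : EuclideanSpace ℝ (Fin (n + 1))) (h α : ℝ)
    (z : EuclideanSpace ℝ (Fin (n + 1))) : Set (EuclideanSpace ℝ (Fin (n + 1))) :=
  {y | 0 < ⟪y - z, ν⟫ ∧ ⟪y - z, ν⟫ < h ∧ ‖y - z‖ * Real.cos (α / 2) < ⟪y - z, ν⟫}

set_option maxHeartbeats 2000000 in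
/-- Existence of truncated cones (Lemma 4.1). -/
theorem stmt0 {n : ℕ} (E : Set (EuclideanSpace ℝ (Fin (n + 1))))
    (x : EuclideanSpace ℝ (Fin (n + 1))) (hx : x ∈ E)
    (c ρ : ℝ) (hc : 0 < c) (hρ : 0 < ρ)
    (hLADR : ∀ y ∈ ball x ρ ∩ E, ∀ r : ℝ, 0 < r → r ≤ ρ →
      ENNReal.ofReal (c * r ^ n) ≤ μH[(n : ℝ)] (ball y r ∩ E))
    (η : ℝ) (hη0 : 0 < η) (hη : η < min (((2 : ℝ) ^ (4 * n))⁻¹) (c ^ 2))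
    (P : AffineSubspace ℝ (EuclideanSpace ℝ (Fin (n + 1))))
    (hxP : x ∈ P) (hP : Module.finrank ℝ P.direction = n)
    (r₀ : ℝ) (hr₀ : 0 < r₀)
    (hflat : ∀ r : ℝ, 0 < r → r < r₀ →
      μH[(n : ℝ)] ((E ∩ ball x r) \ Metric.cthickening (η * r) (P : Set _))
        < ENNReal.ofReal (η * r ^ n))
    (ν : EuclideanSpace ℝ (Fin (n + 1))) (hν : ‖ν‖ = 1)
    (hνP : ∀ v ∈ P.direction, ⟪v, ν⟫ = 0) :
    Disjoint
      (truncCone ν (η ^ ((1 : ℝ) / (4 * n)) * min r₀ ρ)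
        (2 * Real.arctan (η ^ (-(1 : ℝ) / (4 * n)) / 2)) x) E := by
  rw [Set.disjoint_left]
  intro y hy hyE
  simp only [truncCone, Set.mem_setOf_eq] at hy
  obtain ⟨ht0, hth, htc⟩ := hy
  -- points whose inner product with ν exceeds δ are not in the δ-cthickening of P
  have hout : ∀ z : EuclideanSpace ℝ (Fin (n + 1)), ∀ δ : ℝ, 0 ≤ δ → δ < ⟪z - x, ν⟫ →
      z ∉ Metric.cthickening δ (P : Set (EuclideanSpace ℝ (Fin (n + 1)))) := by
    intro z δ hδ0 hδ hz
    rw [Metric.mem_cthickening_iff] at hz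
    have hge : ENNReal.ofReal ⟪z - x, ν⟫ ≤
        infEDist z (P : Set (EuclideanSpace ℝ (Fin (n + 1)))) := by
      rw [le_infEDist]
      intro p hp
      rw [edist_dist]
      apply ENNReal.ofReal_le_ofReal
      have h1 : ⟪x - p, ν⟫ = 0 := hνP _ (AffineSubspace.vsub_mem_direction hxP hp)
      have h2 : ⟪z - p, ν⟫ = ⟪z - x, ν⟫ := by
        have hzp : z - p = (z - x) + (x - p) := by abel
        rw [hzp, inner_add_left, h1, add_zero]
      calc ⟪z - x, ν⟫ = ⟪z - p, ν⟫ := h2.symm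
        _ ≤ ‖z - p‖ * ‖ν‖ := real_inner_le_norm _ _
        _ = dist z p := by rw [hν, mul_one, dist_eq_norm]
    have hcontr := hge.trans hz
    rw [ENNReal.ofReal_le_ofReal_iff hδ0] at hcontr
    linarith
  set t : ℝ := ⟪y - x, ν⟫ with htdef
  have htD : t ≤ ‖y - x‖ := by
    calc t ≤ ‖y - x‖ * ‖ν‖ := by rw [htdef]; exact real_inner_le_norm _ _
      _ = ‖y - x‖ := by rw [hν, mul_one]
  clear_value t
  set M : ℝ := min r₀ ρ with hM
  have hM0 : 0 < M := lt_min hr₀ hρ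
  have hMr₀ : M ≤ r₀ := min_le_left _ _
  have hMρ : M ≤ ρ := min_le_right _ _
  clear_value M
  by_cases hn : n = 0
  · -- the one-dimensional case
    subst hn
    have hη1 : η < 1 := by
      have h := hη.trans_le (min_le_left _ _)
      norm_num at h
      exact h
    -- y - x = t • ν
    have hν0 : ν ≠ 0 := by
      intro h; rw [h, norm_zero] at hν; norm_num at hν
    have hsub : Submodule.span ℝ {ν} = ⊤ := by
      apply Submodule.eq_top_of_finrank_eq
      rw [finrank_span_singleton hν0, finrank_euclideanSpace, Fintype.card_fin]
    have hyx : y - x = t • ν := by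
      have hmem : y - x ∈ Submodule.span ℝ {ν} := by rw [hsub]; trivial
      obtain ⟨a, ha⟩ := Submodule.mem_span_singleton.mp hmem
      have hat : a = t := by
        rw [htdef, ← ha, real_inner_smul_left, real_inner_self_eq_norm_sq, hν]
        ring
      rw [← ha, hat]
    have hDt : ‖y - x‖ = t := by
      rw [hyx, norm_smul, hν, mul_one, Real.norm_eq_abs, abs_of_pos ht0]
    have hthM : t < M := by
      norm_num at hth
      exact hth
    clear hth htc hη hLADR
    -- choose a radius
    have htr₀ : t < r₀ := hthM.trans_le hMr₀
    have htη : t < t / η := by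
      rw [lt_div_iff₀ hη0]
      calc t * η < t * 1 := mul_lt_mul_of_pos_left hη1 ht0
        _ = t := mul_one t
    obtain ⟨m, hm1, hm2, hm3⟩ : ∃ m : ℝ, t < m ∧ m ≤ r₀ ∧ m ≤ t / η :=
      ⟨min r₀ (t / η), lt_min htr₀ htη, min_le_left _ _, min_le_right _ _⟩
    obtain ⟨r, hr⟩ : ∃ r : ℝ, r = (t + m) / 2 := ⟨_, rfl⟩
    have htr : t < r := by rw [hr]; linarith
    have hrr₀ : r < r₀ := by rw [hr]; linarith
    have hηr : η * r < t := by
      have h2 : r < t / η := by rw [hr]; linarith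
      calc η * r < η * (t / η) := mul_lt_mul_of_pos_left h2 hη0
        _ = t := by field_simp
    have hr0 : 0 < r := ht0.trans htr
    have hflat' := hflat r hr0 hrr₀
    have hmem : y ∈ (E ∩ ball x r) \
        Metric.cthickening (η * r) (P : Set (EuclideanSpace ℝ (Fin (0 + 1)))) := by
      refine ⟨⟨hyE, ?_⟩, ?_⟩
      · rw [mem_ball, dist_eq_norm, hDt]; exact htr
      · exact hout y (η * r) (mul_nonneg hη0.le hr0.le) (by rw [← htdef]; exact hηr)
    have h1 : (1 : ENNReal) ≤ μH[((0 : ℕ) : ℝ)] ((E ∩ ball x r) \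
        Metric.cthickening (η * r) (P : Set (EuclideanSpace ℝ (Fin (0 + 1))))) := by
      calc (1 : ENNReal) = μH[((0 : ℕ) : ℝ)] ({y} : Set (EuclideanSpace ℝ (Fin (0 + 1)))) := by
            rw [Nat.cast_zero, MeasureTheory.Measure.hausdorffMeasure_zero_singleton]
        _ ≤ _ := measure_mono (Set.singleton_subset_iff.mpr hmem)
    have h2 : (1 : ENNReal) < ENNReal.ofReal (η * r ^ 0) := h1.trans_lt hflat'
    rw [pow_zero, mul_one] at h2
    have h3 : ENNReal.ofReal η < 1 := ENNReal.ofReal_lt_one.mpr hη1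
    exact lt_irrefl _ (h2.trans h3)
  · -- the main case n ≥ 1
    have hn1 : 1 ≤ n := Nat.one_le_iff_ne_zero.mpr hn
    have hn' : (1 : ℝ) ≤ (n : ℝ) := by exact_mod_cast hn1
    have h4n : (0 : ℝ) < 4 * n := by linarith
    set β : ℝ := (1 : ℝ) / (4 * n) with hβdef
    have hβ0 : 0 < β := by rw [hβdef]; exact div_pos one_pos h4n
    have hβ4 : β ≤ 1 / 4 := by
      rw [hβdef, div_le_div_iff₀ h4n (by norm_num)]
      linarith
    clear_value β
    have hη2 : η < ((2 : ℝ) ^ (4 * n))⁻¹ := hη.trans_le (min_le_left _ _)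
    have hηc : η < c ^ 2 := hη.trans_le (min_le_right _ _)
    have h2pow : (1 : ℝ) ≤ (2 : ℝ) ^ (4 * n) := one_le_pow₀ (by norm_num)
    have hη1 : η < 1 := by
      have h5 : ((2 : ℝ) ^ (4 * n))⁻¹ ≤ 1 := by
        rw [inv_le_one_iff₀]; right; exact h2pow
      linarith
    set a : ℝ := η ^ β with hadef
    have ha0 : 0 < a := by rw [hadef]; exact Real.rpow_pos_of_pos hη0 β
    -- a < 1/2
    have hacomp : ((2 : ℝ) ^ (4 * n))⁻¹ ^ β = 1 / 2 := by
      rw [Real.inv_rpow (by positivity), ← Real.rpow_natCast (2 : ℝ) (4 * n),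
        ← Real.rpow_mul (by norm_num)]
      have h6 : ((4 * n : ℕ) : ℝ) * β = 1 := by
        rw [hβdef]; push_cast; field_simp
      rw [h6, Real.rpow_one, one_div]
    have ha2 : a < 1 / 2 := by
      rw [hadef, ← hacomp]
      exact Real.rpow_lt_rpow hη0.le hη2 hβ0
    clear_value a
    -- the cone condition
    have hcone : ‖y - x‖ < t * (a⁻¹ / 2 + a) := by
      have hneg : η ^ (-(1 : ℝ) / (4 * n)) = a⁻¹ := by
        rw [hadef, show (-(1 : ℝ) / (4 * n)) = -β by rw [hβdef]; ring,
          Real.rpow_neg hη0.le]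
      set s : ℝ := a⁻¹ / 2 with hsdef
      have hs0 : 0 < s := by rw [hsdef]; exact half_pos (inv_pos.mpr ha0)
      have hsa : s * a = 1 / 2 := by
        rw [hsdef]; field_simp
      clear_value s
      have harctan : (2 : ℝ) * Real.arctan (η ^ (-(1 : ℝ) / (4 * n)) / 2) / 2
          = Real.arctan s := by
        rw [hneg, hsdef]; ring_nf
      rw [harctan, Real.cos_arctan] at htc
      have hsqrtpos : 0 < Real.sqrt (1 + s ^ 2) := by positivity
      have hD1 : ‖y - x‖ < t * Real.sqrt (1 + s ^ 2) := by
        rw [mul_one_div, div_lt_iff₀ hsqrtpos] at htc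
        exact htc
      have hsqle : Real.sqrt (1 + s ^ 2) ≤ s + a := by
        have h7 : (1 : ℝ) + s ^ 2 ≤ (s + a) ^ 2 := by
          have e : (s + a) ^ 2 = s ^ 2 + 2 * (s * a) + a ^ 2 := by ring
          rw [e, hsa]
          have := sq_nonneg a
          linarith
        calc Real.sqrt (1 + s ^ 2) ≤ Real.sqrt ((s + a) ^ 2) := Real.sqrt_le_sqrt h7
          _ = s + a := Real.sqrt_sq (by positivity)
      rw [hsdef]
      calc ‖y - x‖ < t * Real.sqrt (1 + s ^ 2) := hD1
        _ ≤ t * (s + a) := mul_le_mul_of_nonneg_left hsqle ht0.le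
        _ = t * (a⁻¹ / 2 + a) := by rw [hsdef]
    -- set up radii
    have hth' : t < a * M := hth
    obtain ⟨r', hr'eq⟩ : ∃ r' : ℝ, r' = t * a⁻¹ := ⟨_, rfl⟩
    have hr'def : r' = t / a := by rw [hr'eq, div_eq_mul_inv]
    have hr'0 : 0 < r' := by rw [hr'def]; exact div_pos ht0 ha0
    have hr'M : r' < M := by
      rw [hr'def, div_lt_iff₀ ha0]
      exact hth'.trans_le (mul_comm a M).le
    have hDr' : ‖y - x‖ + t / 2 < r' := by
      have hb2 : (2 : ℝ) ≤ a⁻¹ := by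
        refine (le_inv_comm₀ (by norm_num : (0:ℝ) < 2) ha0).mpr ?_
        rw [show ((2:ℝ))⁻¹ = 1 / 2 by norm_num]
        linarith
      have hkey : a⁻¹ / 2 + a + 1 / 2 ≤ a⁻¹ := by linarith
      have h8 : t * (a⁻¹ / 2 + a) + t / 2 ≤ t * a⁻¹ := by
        have hmul := mul_le_mul_of_nonneg_left hkey ht0.le
        nlinarith [hmul]
      rw [hr'eq]
      linarith
    have hyρ : y ∈ ball x ρ := by
      rw [mem_ball, dist_eq_norm]
      have h9 : ‖y - x‖ < r' := by linarith
      linarith [hr'M.trans_le hMρ]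
    -- lower regularity at y with radius t/2
    have ht2ρ : t / 2 ≤ ρ := by
      have h10 : a * M < 1 / 2 * M := mul_lt_mul_of_pos_right ha2 hM0
      linarith
    have hlow := hLADR y ⟨hyρ, hyE⟩ (t / 2) (by linarith) ht2ρ
    -- η * r' ≤ t / 2
    have hηr' : η * r' ≤ t / 2 := by
      have hηa : η / a ≤ a := by
        have e1 : η / a = η ^ ((1 : ℝ) - β) := by
          rw [hadef, Real.rpow_sub hη0, Real.rpow_one]
        rw [e1, hadef]
        exact Real.rpow_le_rpow_of_exponent_ge hη0 hη1.le (by linarith)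
      have h11 : η / a ≤ 1 / 2 := hηa.trans (by linarith)
      have e2 : η * r' = t * (η / a) := by rw [hr'def]; field_simp
      rw [e2]
      have hmul := mul_le_mul_of_nonneg_left h11 ht0.le
      linarith
    -- inclusion
    have hsubset : ball y (t / 2) ∩ E ⊆ (E ∩ ball x r') \
        Metric.cthickening (η * r') (P : Set (EuclideanSpace ℝ (Fin (n + 1)))) := by
      rintro z ⟨hz1, hz2⟩
      rw [mem_ball, dist_eq_norm] at hz1
      refine ⟨⟨hz2, ?_⟩, ?_⟩
      · rw [mem_ball, dist_eq_norm]
        calc ‖z - x‖ = ‖(z - y) + (y - x)‖ := by rw [sub_add_sub_cancel]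
          _ ≤ ‖z - y‖ + ‖y - x‖ := norm_add_le _ _
          _ < r' := by linarith
      · apply hout z (η * r') (mul_nonneg hη0.le hr'0.le)
        have h12 : ⟪z - x, ν⟫ = ⟪z - y, ν⟫ + t := by
          rw [htdef, show z - x = (z - y) + (y - x) by abel, inner_add_left]
        have h13 : -‖z - y‖ ≤ ⟪z - y, ν⟫ := by
          have h14 := abs_real_inner_le_norm (z - y) ν
          rw [hν, mul_one] at h14
          linarith [abs_le.mp h14]
        have h15 : t / 2 < ⟪z - x, ν⟫ := by
          rw [h12]; linarith
        linarith
    have hflat' := hflat r' hr'0 (hr'M.trans_le hMr₀)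
    have hchain : ENNReal.ofReal (c * (t / 2) ^ n) < ENNReal.ofReal (η * r' ^ n) :=
      lt_of_le_of_lt (hlow.trans (measure_mono hsubset)) hflat'
    have key : c * (t / 2) ^ n < η * r' ^ n := by
      rw [ENNReal.ofReal_lt_ofReal_iff_of_nonneg
        (mul_nonneg hc.le (pow_nonneg (by linarith) n))] at hchain
      exact hchain
    -- derive the contradiction
    have htn : (0 : ℝ) < t ^ n := pow_pos ht0 n
    have h2n : (0 : ℝ) < (2 : ℝ) ^ n := by positivity
    have han : (0 : ℝ) < a ^ n := pow_pos ha0 n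
    have key2 : c * a ^ n < η * 2 ^ n := by
      have hpos : (0 : ℝ) < t ^ n / (2 ^ n * a ^ n) := div_pos htn (mul_pos h2n han)
      have e1 : c * (t / 2) ^ n = (c * a ^ n) * (t ^ n / (2 ^ n * a ^ n)) := by
        rw [div_pow]; field_simp [ha0.ne']
      have e2 : η * r' ^ n = (η * 2 ^ n) * (t ^ n / (2 ^ n * a ^ n)) := by
        rw [hr'def, div_pow]; field_simp [ha0.ne']
      rw [e1, e2] at key
      exact lt_of_mul_lt_mul_right key hpos.le
    set A : ℝ := η ^ ((1 : ℝ) / 4) with hAdef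
    set B : ℝ := η ^ ((1 : ℝ) / 2) with hBdef
    have hA0 : 0 < A := by rw [hAdef]; exact Real.rpow_pos_of_pos hη0 _
    have hB0 : 0 < B := by rw [hBdef]; exact Real.rpow_pos_of_pos hη0 _
    have haA : a ^ n = A := by
      rw [hadef, hAdef, ← Real.rpow_natCast (η ^ β) n, ← Real.rpow_mul hη0.le]
      congr 1
      rw [hβdef]
      field_simp
    have hηBA : η = B * (A * A) := by
      rw [hAdef, hBdef, ← Real.rpow_add hη0, ← Real.rpow_add hη0]
      norm_num
    have hBc : B < c := by
      have h16 : Real.sqrt η < Real.sqrt (c ^ 2) := Real.sqrt_lt_sqrt hη0.le hηc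
      rw [Real.sqrt_sq hc.le, Real.sqrt_eq_rpow] at h16
      rw [hBdef]
      exact h16
    have hA2 : A * 2 ^ n < 1 := by
      have h17 : A < ((2 : ℝ) ^ n)⁻¹ := by
        have h18 : η ^ ((1 : ℝ) / 4) < (((2 : ℝ) ^ (4 * n))⁻¹) ^ ((1 : ℝ) / 4) :=
          Real.rpow_lt_rpow hη0.le hη2 (by norm_num)
        have h19 : (((2 : ℝ) ^ (4 * n))⁻¹) ^ ((1 : ℝ) / 4) = ((2 : ℝ) ^ n)⁻¹ := by
          rw [Real.inv_rpow (by positivity), show 4 * n = n * 4 by ring, pow_mul,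
            ← Real.rpow_natCast ((2 : ℝ) ^ n) 4, ← Real.rpow_mul (by positivity)]
          norm_num
        rw [hAdef]
        rw [h19] at h18
        exact h18
      calc A * 2 ^ n < ((2 : ℝ) ^ n)⁻¹ * 2 ^ n := mul_lt_mul_of_pos_right h17 h2n
        _ = 1 := by field_simp
    clear_value A B
    rw [haA, hηBA] at key2
    have hstep1 : B * (A * A) * 2 ^ n < c * (A * A) * 2 ^ n :=
      mul_lt_mul_of_pos_right (mul_lt_mul_of_pos_right hBc (mul_pos hA0 hA0)) h2n
    have hstep2 : c * (A * A) * 2 ^ n = (c * A) * (A * 2 ^ n) := by ring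
    have hstep3 : (c * A) * (A * 2 ^ n) < (c * A) * 1 :=
      mul_lt_mul_of_pos_left hA2 (mul_pos hc hA0)
    linarith [key2, hstep1, hstep3, hstep2]
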